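/- Fix p, y ∈ (0,1). Then, as the integer N tends to infinity, N·[ y^{1/N}·log(y^{1/N}/p^{1/N}) + (1−y^{1/N})·log((1−y^{1/N})/(1−p^{1/N})) ] converges to log(y) − log(p) − log(y)·log(log(y)/log(p)), i.e. to I(y). (This says that N·𝓘_N(y^{1/N}) → I(y), where 𝓘_N is the Bernoulli(p^{1/N}) Cramér rate function, the rate for one stage of the optimal fixed-level N-stage splitting estimator.) -/

import Mathlib

open Filter Real

lemma aux_tendsto_one_div : Tendsto (fun N : ℕ => (1:ℝ)/N) atTop (nhdsWithin (0:ℝ) {x | x ≠ 0}) := by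
  refine tendsto_nhdsWithin_of_tendsto_nhds_of_eventually_within _
    tendsto_one_div_atTop_nhds_zero_nat ?_
  filter_upwards [eventually_ge_atTop 1] with N hN
  have : (N:ℝ) ≠ 0 := Nat.cast_ne_zero.mpr (by omega)
  simp [this]

lemma aux_key (y : ℝ) (hy : 0 < y) :
    Tendsto (fun N : ℕ => (N:ℝ) * (1 - y ^ ((1:ℝ)/N))) atTop (nhds (-Real.log y)) := by
  have heq : (fun t : ℝ => y ^ t) = fun t => Real.exp (Real.log y * t) :=
    funext fun t => Real.rpow_def_of_pos hy t
  have hd : HasDerivAt (fun t : ℝ => y ^ t) (Real.log y) 0 := by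
    rw [heq]
    have h1 : HasDerivAt (fun t : ℝ => Real.log y * t) (Real.log y) 0 := by
      simpa using (hasDerivAt_id (0:ℝ)).const_mul (Real.log y)
    simpa [Function.comp_def] using (Real.hasDerivAt_exp (Real.log y * 0)).comp 0 h1
  have hslope := hasDerivAt_iff_tendsto_slope.mp hd
  have h2 := hslope.comp aux_tendsto_one_div
  have h3 : Tendsto (fun N : ℕ => (N:ℝ) * (y ^ ((1:ℝ)/N) - 1)) atTop (nhds (Real.log y)) := by
    refine h2.congr' ?_
    filter_upwards [eventually_ge_atTop 1] with N hN
    have hN0 : (N:ℝ) ≠ 0 := Nat.cast_ne_zero.mpr (by omega)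
    simp only [Function.comp, slope_def_field]
    rw [Real.rpow_zero]
    field_simp
    ring
  have := h3.neg
  refine this.congr fun N => by ring

theorem tendsto_staged_rate (p y : ℝ) (hp : p ∈ Set.Ioo (0 : ℝ) 1)
    (hy : y ∈ Set.Ioo (0 : ℝ) 1) :
    Tendsto (fun N : ℕ =>
      (N : ℝ) * (y ^ ((1 : ℝ) / N) * Real.log (y ^ ((1 : ℝ) / N) / p ^ ((1 : ℝ) / N)) +
        (1 - y ^ ((1 : ℝ) / N)) *
          Real.log ((1 - y ^ ((1 : ℝ) / N)) / (1 - p ^ ((1 : ℝ) / N)))))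
      atTop
      (nhds (Real.log y - Real.log p - Real.log y * Real.log (Real.log y / Real.log p))) := by
  obtain ⟨hp0, hp1⟩ := hp
  obtain ⟨hy0, hy1⟩ := hy
  have hlp : Real.log p < 0 := Real.log_neg hp0 hp1
  have hly : Real.log y < 0 := Real.log_neg hy0 hy1
  have hF := aux_key y hy0
  have hG := aux_key p hp0
  have ha : Tendsto (fun N : ℕ => y ^ ((1:ℝ)/N)) atTop (nhds 1) := by
    have h1 : Tendsto (fun N : ℕ => Real.log y * ((1:ℝ)/N)) atTop (nhds 0) := by
      simpa using tendsto_one_div_atTop_nhds_zero_nat.const_mul (Real.log y)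
    have h2 := (Real.continuous_exp.tendsto 0).comp h1
    rw [Real.exp_zero] at h2
    refine h2.congr fun N => ?_
    simp [Real.rpow_def_of_pos hy0, Function.comp]
  have hratio : Tendsto (fun N : ℕ => ((N:ℝ) * (1 - y ^ ((1:ℝ)/N))) / ((N:ℝ) * (1 - p ^ ((1:ℝ)/N))))
      atTop (nhds (Real.log y / Real.log p)) := by
    have := hF.div hG (by simpa using hlp.ne)
    simpa [neg_div_neg_eq, Pi.div_def] using this
  have hlog : Tendsto (fun N : ℕ => Real.log (((N:ℝ) * (1 - y ^ ((1:ℝ)/N))) / ((N:ℝ) * (1 - p ^ ((1:ℝ)/N)))))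
      atTop (nhds (Real.log (Real.log y / Real.log p))) :=
    hratio.log (div_ne_zero hly.ne hlp.ne)
  have hmain : Tendsto (fun N : ℕ =>
      y ^ ((1:ℝ)/N) * (Real.log y - Real.log p) +
      ((N:ℝ) * (1 - y ^ ((1:ℝ)/N))) *
        Real.log (((N:ℝ) * (1 - y ^ ((1:ℝ)/N))) / ((N:ℝ) * (1 - p ^ ((1:ℝ)/N)))))
      atTop (nhds (1 * (Real.log y - Real.log p) +
        (-Real.log y) * Real.log (Real.log y / Real.log p))) :=
    (ha.mul_const _).add (hF.mul hlog)
  have hval : (1 : ℝ) * (Real.log y - Real.log p) +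
      (-Real.log y) * Real.log (Real.log y / Real.log p) =
      Real.log y - Real.log p - Real.log y * Real.log (Real.log y / Real.log p) := by ring
  rw [hval] at hmain
  refine hmain.congr' ?_
  filter_upwards [eventually_ge_atTop 1] with N hN
  have hN0 : (N:ℝ) ≠ 0 := Nat.cast_ne_zero.mpr (by omega)
  have hay : (0:ℝ) < y ^ ((1:ℝ)/N) := Real.rpow_pos_of_pos hy0 _
  have hap : (0:ℝ) < p ^ ((1:ℝ)/N) := Real.rpow_pos_of_pos hp0 _
  have hlog_div : Real.log (y ^ ((1:ℝ)/N) / p ^ ((1:ℝ)/N)) =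
      ((1:ℝ)/N) * Real.log y - ((1:ℝ)/N) * Real.log p := by
    rw [Real.log_div hay.ne' hap.ne', Real.log_rpow hy0, Real.log_rpow hp0]
  have hmdm : ((N:ℝ) * (1 - y ^ ((1:ℝ)/N))) / ((N:ℝ) * (1 - p ^ ((1:ℝ)/N))) =
      (1 - y ^ ((1:ℝ)/N)) / (1 - p ^ ((1:ℝ)/N)) := mul_div_mul_left _ _ hN0
  rw [hmdm, hlog_div]
  field_simp
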